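/- If 𝓢 is an independent set in the blob graph G° (i.e., the elements of 𝓢 are pairwise disjoint connected vertex sets with no edges of G between any two of them), and each G[X] for X ∈ 𝓢 belongs to a graph class 𝓗, then S = ⋃𝓢 satisfies: every connected component of G[S] is equal to G[X] for some X ∈ 𝓢; in particular S is an induced 𝓗-packing in G. -/

import Mathlib

/-- The blob graph `G°` of `G`. -/
def blobGraph {V : Type*} (G : SimpleGraph V) :
    SimpleGraph {X : Set V // (G.induce X).Connected} :=
  SimpleGraph.fromRel (fun X Y => (G.induce (X.1 ∪ Y.1)).Connected)

/-- The vertex set of the connected component of `G[S]` containing `v ∈ S`. -/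
def compSet {V : Type*} (G : SimpleGraph V) (S : Set V) (v : ↥S) : Set V :=
  {u : V | ∃ hu : u ∈ S, (G.induce S).Reachable ⟨u, hu⟩ v}

/-- Two connected sets joined by an edge have connected union. -/
lemma union_connected_of_adj {V : Type*} {G : SimpleGraph V} {X Y : Set V}
    (hX : (G.induce X).Connected) (hY : (G.induce Y).Connected)
    {a b : V} (ha : a ∈ X) (hb : b ∈ Y) (hab : G.Adj a b) :
    (G.induce (X ∪ Y)).Connected := by
  have h1 : (G.induce (X ∪ {a, b})).Connected :=
    SimpleGraph.induce_union_connected hX.preconnected (SimpleGraph.induce_pair_connected_of_adj hab).preconnected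
      ⟨a, ha, by simp⟩
  have h2 : (G.induce ((X ∪ {a, b}) ∪ Y)).Connected :=
    SimpleGraph.induce_union_connected h1.preconnected hY.preconnected ⟨b, by simp, hb⟩
  have : (X ∪ {a, b}) ∪ Y = X ∪ Y := by
    ext x
    simp only [Set.mem_union, Set.mem_insert_iff, Set.mem_singleton_iff]
    constructor
    · rintro ((h | rfl | rfl) | h) <;> tauto
    · tauto
  rwa [this] at h2

/-- If `𝒮` is an independent set in the blob graph `G°`, then every connected
component of `G[⋃𝒮]` equals `G[X]` for some `X ∈ 𝒮`; in particular, if each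
`G[X]`, `X ∈ 𝒮`, belongs to the class (encoded by `P`), then `⋃𝒮` is an induced
`𝓗`-packing. -/
theorem stmt7 {V : Type*} (G : SimpleGraph V) (P : Set V → Prop)
    (𝒮 : Set {X : Set V // (G.induce X).Connected})
    (hind : ∀ X ∈ 𝒮, ∀ Y ∈ 𝒮, X ≠ Y → ¬ (blobGraph G).Adj X Y) :
    (∀ v : ↥(⋃ X ∈ 𝒮, X.1), ∃ X ∈ 𝒮, compSet G (⋃ X ∈ 𝒮, X.1) v = X.1) ∧
    ((∀ X ∈ 𝒮, P X.1) →
      ∀ v : ↥(⋃ X ∈ 𝒮, X.1), P (compSet G (⋃ X ∈ 𝒮, X.1) v)) := by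
  set S : Set V := ⋃ X ∈ 𝒮, X.1 with hS
  -- edge-closure: if a ∈ X ∈ 𝒮, b ∈ S, and a ~ b, then b ∈ X
  have hclosed : ∀ X ∈ 𝒮, ∀ a ∈ X.1, ∀ b ∈ S, G.Adj a b → b ∈ X.1 := by
    intro X hX a ha b hbS hab
    obtain ⟨Y, hY, hbY⟩ : ∃ Y ∈ 𝒮, b ∈ Y.1 := by
      simpa [hS] using hbS
    by_cases hXY : X = Y
    · exact hXY ▸ hbY
    · exfalso
      apply hind X hX Y hY hXY
      refine ⟨by simpa using hXY, Or.inl ?_⟩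
      exact union_connected_of_adj X.2 Y.2 ha hbY hab
  have key : ∀ v : ↥S, ∀ X ∈ 𝒮, (v : V) ∈ X.1 → compSet G S v = X.1 := by
    intro v X hX hvX
    ext u
    constructor
    · rintro ⟨hu, hreach⟩
      obtain ⟨w⟩ := hreach.symm
      -- walk from v to ⟨u, hu⟩ in induce S; induct
      clear hreach
      have : ∀ (a b : ↥S) (_ : (G.induce S).Walk a b), (a : V) ∈ X.1 → (b : V) ∈ X.1 := by
        intro a b w
        induction w with
        | nil => exact id
        | @cons c d e hcd _ ih =>
          intro hc
          exact ih (hclosed X hX c hc d d.2 hcd)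
      exact this v ⟨u, hu⟩ w hvX
    · intro huX
      have hXS : X.1 ⊆ S := by
        intro x hx
        exact Set.mem_biUnion hX hx
      refine ⟨hXS huX, ?_⟩
      have hr : (G.induce X.1).Reachable ⟨u, huX⟩ ⟨(v : V), hvX⟩ := X.2.preconnected _ _
      have := hr.map (SimpleGraph.induceHom (SimpleGraph.Hom.id (G := G))
        (Set.mapsTo_id _ |>.mono_right hXS))
      convert this using 2 <;> rfl
  constructor
  · intro v
    obtain ⟨X, hX, hvX⟩ := Set.mem_iUnion₂.mp v.2
    exact ⟨X, hX, key v X hX hvX⟩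
  · intro hP v
    obtain ⟨X, hX, hvX⟩ := Set.mem_iUnion₂.mp v.2
    rw [key v X hX hvX]
    exact hP X hX
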